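/- The root weight of the dilatable global entropy equals the maximum ℓ₁ norm over the sequence-form polytope: γ_∅ = max_{x∈Q} ‖x‖₁ = max_{x∈Q} Σ_{σ∈Σ} x_σ. -/

import Mathlib

open Finset

set_option linter.unusedSectionVars false

namespace DGEaux

variable {J : Type} [Fintype J] [DecidableEq J]
  {A : J → Type} [∀ j, Fintype (A j)] [∀ j, DecidableEq (A j)] [∀ j, Nonempty (A j)]

/-- `c` is a child of `j`. -/
def chld (p : J → Option ((j : J) × A j)) (c j : J) : Prop := ∃ a, p c = some ⟨j, a⟩

instance {p : J → Option ((j : J) × A j)} {c j : J} : Decidable (chld p c j) :=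
  decidable_of_iff (∃ a, p c = some ⟨j, a⟩) Iff.rfl

/-- `c` is a (weak) descendant of `j`. -/
def desc (p : J → Option ((j : J) × A j)) (c j : J) : Prop :=
  Relation.ReflTransGen (chld p) c j

theorem wf_irrefl {α} {r : α → α → Prop} (h : WellFounded r) (a : α) : ¬ r a a := by
  induction a using h.induction with
  | _ a ih => exact fun hr => ih a hr hr

theorem parent_unique {p : J → Option ((j : J) × A j)} {c j j' : J}
    (h : chld p c j) (h' : chld p c j') : j = j' := by
  obtain ⟨a, ha⟩ := h; obtain ⟨a', ha'⟩ := h'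
  rw [ha] at ha'
  exact (Sigma.mk.inj_iff.mp (Option.some.inj ha')).1

theorem desc_chain {p : J → Option ((j : J) × A j)} {x c₁ c₂ : J}
    (h₁ : desc p x c₁) (h₂ : desc p x c₂) : desc p c₁ c₂ ∨ desc p c₂ c₁ := by
  induction h₁ with
  | refl => exact Or.inl h₂
  | tail hb hstep ih =>
      rename_i b c₁'
      rcases ih with hb2 | h2b
      · rcases hb2.cases_head with rfl | ⟨q, hq, hqc⟩
        · exact Or.inr (Relation.ReflTransGen.single hstep)
        · rw [parent_unique hq hstep] at hqc
          exact Or.inl hqc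
      · exact Or.inr (h2b.tail hstep)

theorem no_cycle {p : J → Option ((j : J) × A j)}
    (hwf : WellFounded (chld p)) {c j : J} (h : desc p j c) (hc : chld p c j) : False :=
  wf_irrefl hwf.transGen c (Relation.TransGen.head' hc h)

/-- two children of the same node with a common descendant are equal -/
theorem child_unique {p : J → Option ((j : J) × A j)}
    (hwf : WellFounded (chld p)) {j x c₁ c₂ : J}
    (h₁ : chld p c₁ j) (h₂ : chld p c₂ j) (d₁ : desc p x c₁) (d₂ : desc p x c₂) :
    c₁ = c₂ := by
  have key : ∀ {u v : J}, chld p u j → chld p v j → desc p u v → u = v := by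
    intro u v hu hv huv
    rcases huv.cases_head with rfl | ⟨q, hq, hqv⟩
    · rfl
    · rw [parent_unique hq hu] at hqv
      exact absurd hqv (fun h => no_cycle hwf h hv)
  rcases desc_chain d₁ d₂ with h | h
  · exact key h₁ h₂ h
  · exact (key h₂ h₁ h).symm

open Classical in
/-- The subtree rooted at `j`, as a finset. -/
noncomputable def subtree (p : J → Option ((j : J) × A j)) (j : J) : Finset J :=
  univ.filter (fun c => desc p c j)

theorem mem_subtree {p : J → Option ((j : J) × A j)} {x j : J} :
    x ∈ subtree p j ↔ desc p x j := by
  classical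
  simp [subtree]


/-- decomposition of the sum over a subtree -/
theorem sum_subtree {p : J → Option ((j : J) × A j)}
    (hwf : WellFounded (chld p)) (f : J → ℝ) (j : J) :
    ∑ x ∈ subtree p j, f x
      = f j + ∑ c ∈ univ.filter (fun c => chld p c j), ∑ x ∈ subtree p c, f x := by
  have hdisj : (↑(univ.filter (fun c => chld p c j)) : Set J).PairwiseDisjoint
      (subtree p) := by
    intro c₁ h₁ c₂ h₂ hne
    simp only [coe_filter, Set.mem_setOf_eq, mem_univ, true_and] at h₁ h₂
    refine Finset.disjoint_left.mpr fun x hx₁ hx₂ => ?_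
    exact hne (child_unique hwf h₁ h₂ (mem_subtree.mp hx₁) (mem_subtree.mp hx₂))
  have hset : subtree p j
      = insert j ((univ.filter (fun c => chld p c j)).biUnion (subtree p)) := by
    ext x
    simp only [mem_subtree, mem_insert, mem_biUnion, mem_filter, mem_univ, true_and]
    constructor
    · intro h
      rcases h.cases_tail with h | ⟨c, hc, hcj⟩
      · exact Or.inl h.symm
      · exact Or.inr ⟨c, hcj, hc⟩
    · rintro (rfl | ⟨c, hc, hx⟩)
      · exact Relation.ReflTransGen.refl
      · exact hx.tail hc
  have hj : j ∉ (univ.filter (fun c => chld p c j)).biUnion (subtree p) := by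
    simp only [mem_biUnion, mem_filter, mem_univ, true_and, not_exists]
    rintro c ⟨hc, hj⟩
    exact no_cycle hwf (mem_subtree.mp hj) hc
  rw [hset, Finset.sum_insert hj, Finset.sum_biUnion hdisj]

/-- grouping children by action -/
theorem sum_children {p : J → Option ((j : J) × A j)} (g : J → ℝ) (j : J) :
    ∑ c ∈ univ.filter (fun c => chld p c j), g c
      = ∑ a : A j, ∑ c ∈ univ.filter (fun c => p c = some ⟨j, a⟩), g c := by
  have hset : univ.filter (fun c => chld p c j)
      = (univ : Finset (A j)).biUnion
          (fun a => univ.filter (fun c => p c = some ⟨j, a⟩)) := by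
    ext c
    simp only [mem_filter, mem_univ, true_and, mem_biUnion]
    exact Iff.rfl
  rw [hset, Finset.sum_biUnion]
  intro a₁ h₁ a₂ h₂ hne
  refine Finset.disjoint_left.mpr fun c hc₁ hc₂ => ?_
  simp only [mem_coe, mem_filter, mem_univ, true_and] at hc₁ hc₂
  rw [hc₁] at hc₂
  obtain ⟨-, h⟩ := Sigma.mk.inj_iff.mp (Option.some.inj hc₂)
  exact hne (eq_of_heq h)

/-- partitioning all of `J` by roots -/
theorem sum_roots {p : J → Option ((j : J) × A j)}
    (hwf : WellFounded (chld p)) (f : J → ℝ) :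
    ∑ j, f j = ∑ q ∈ univ.filter (fun q => p q = none), ∑ x ∈ subtree p q, f x := by
  have hwf' : WellFounded (fun q j : J => chld p j q) := by
    have h1 : IsTrans J (fun q j : J => Relation.TransGen (chld p) j q) :=
      ⟨fun _ _ _ h₁ h₂ => h₂.trans h₁⟩
    have h2 : IsIrrefl J (fun q j : J => Relation.TransGen (chld p) j q) :=
      ⟨fun a => wf_irrefl hwf.transGen a⟩
    exact Subrelation.wf (fun {q j} h => Relation.TransGen.single h)
      (Finite.wellFounded_of_trans_of_irrefl _)
  have hroot : ∀ j : J, ∃ q, p q = none ∧ desc p j q := by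
    intro j
    induction j using hwf'.induction with
    | _ j ih =>
      rcases h : p j with - | ⟨q, a⟩
      · exact ⟨j, h, Relation.ReflTransGen.refl⟩
      · obtain ⟨r, hr, hd⟩ := ih q ⟨a, h⟩
        exact ⟨r, hr, Relation.ReflTransGen.head ⟨a, h⟩ hd⟩
  have hdisj : (↑(univ.filter (fun q : J => p q = none)) : Set J).PairwiseDisjoint
      (subtree p) := by
    intro q₁ h₁ q₂ h₂ hne
    simp only [coe_filter, Set.mem_setOf_eq, mem_univ, true_and] at h₁ h₂
    refine Finset.disjoint_left.mpr fun x hx₁ hx₂ => ?_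
    have key : ∀ {u v : J}, p u = none → desc p u v → u = v := by
      intro u v hu huv
      rcases huv.cases_head with rfl | ⟨s, ⟨a, hs⟩, -⟩
      · rfl
      · rw [hu] at hs; exact absurd hs (by simp)
    rcases desc_chain (mem_subtree.mp hx₁) (mem_subtree.mp hx₂) with h | h
    · exact hne (key h₁ h)
    · exact hne (key h₂ h).symm
  have hcover : (univ.filter (fun q : J => p q = none)).biUnion (subtree p) = univ := by
    refine Finset.eq_univ_of_forall fun j => ?_
    obtain ⟨q, hq, hd⟩ := hroot j
    exact mem_biUnion.mpr ⟨q, by simp [hq], mem_subtree.mpr hd⟩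
  conv_lhs => rw [← hcover]
  rw [Finset.sum_biUnion hdisj]


theorem subtree_bound {p : J → Option ((j : J) × A j)}
    (hwf : WellFounded (chld p)) (γ : J → ℝ)
    (hγ : ∀ j : J, γ j = 1 + (univ : Finset (A j)).sup' univ_nonempty
        (fun a => ∑ j' ∈ univ.filter (fun j' => p j' = some ⟨j, a⟩), γ j'))
    (x : Option ((j : J) × A j) → ℝ) (hx0 : ∀ σ, 0 ≤ x σ)
    (hxs : ∀ j : J, ∑ a : A j, x (some ⟨j, a⟩) = x (p j)) (j : J) :
    ∑ j' ∈ subtree p j, x (p j') ≤ γ j * x (p j) := by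
  induction j using hwf.induction with
  | _ j ih =>
    set M := (univ : Finset (A j)).sup' univ_nonempty
        (fun a => ∑ j' ∈ univ.filter (fun j' => p j' = some ⟨j, a⟩), γ j') with hM
    rw [sum_subtree hwf _ j, sum_children]
    have step1 : ∀ a : A j,
        ∑ c ∈ univ.filter (fun c => p c = some ⟨j, a⟩), ∑ y ∈ subtree p c, x (p y)
          ≤ M * x (some ⟨j, a⟩) := by
      intro a
      calc ∑ c ∈ univ.filter (fun c => p c = some ⟨j, a⟩), ∑ y ∈ subtree p c, x (p y)
          ≤ ∑ c ∈ univ.filter (fun c => p c = some ⟨j, a⟩), γ c * x (p c) := by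
            refine Finset.sum_le_sum fun c hc => ?_
            simp only [mem_filter, mem_univ, true_and] at hc
            exact ih c ⟨a, hc⟩
        _ = (∑ c ∈ univ.filter (fun c => p c = some ⟨j, a⟩), γ c) * x (some ⟨j, a⟩) := by
            rw [Finset.sum_mul]
            refine Finset.sum_congr rfl fun c hc => ?_
            simp only [mem_filter, mem_univ, true_and] at hc
            rw [hc]
        _ ≤ M * x (some ⟨j, a⟩) := by
            refine mul_le_mul_of_nonneg_right ?_ (hx0 _)
            rw [hM]
            exact Finset.le_sup' (fun a : A j => ∑ j' ∈ univ.filter (fun j' => p j' = some ⟨j, a⟩), γ j') (mem_univ a)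
    calc x (p j) + ∑ a : A j,
          ∑ c ∈ univ.filter (fun c => p c = some ⟨j, a⟩), ∑ y ∈ subtree p c, x (p y)
        ≤ x (p j) + ∑ a : A j, M * x (some ⟨j, a⟩) := by
          exact add_le_add (le_refl _) (Finset.sum_le_sum fun a _ => step1 a)
      _ = x (p j) + M * x (p j) := by rw [← Finset.mul_sum, hxs j]
      _ = γ j * x (p j) := by rw [hγ j, ← hM]; ring

theorem subtree_eq {p : J → Option ((j : J) × A j)}
    (hwf : WellFounded (chld p)) (γ : J → ℝ) (m : ∀ j, A j)
    (hγ : ∀ j : J, γ j = 1 + (univ : Finset (A j)).sup' univ_nonempty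
        (fun a => ∑ j' ∈ univ.filter (fun j' => p j' = some ⟨j, a⟩), γ j'))
    (hm : ∀ j : J, (univ : Finset (A j)).sup' univ_nonempty
        (fun a => ∑ j' ∈ univ.filter (fun j' => p j' = some ⟨j, a⟩), γ j')
        = ∑ j' ∈ univ.filter (fun j' => p j' = some ⟨j, m j⟩), γ j')
    (x : Option ((j : J) × A j) → ℝ)
    (hxi : ∀ (j : J) (a : A j), x (some ⟨j, a⟩) = if a = m j then x (p j) else 0)
    (j : J) :
    ∑ j' ∈ subtree p j, x (p j') = γ j * x (p j) := by
  induction j using hwf.induction with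
  | _ j ih =>
    rw [sum_subtree hwf _ j, sum_children]
    have step1 : ∀ a : A j,
        ∑ c ∈ univ.filter (fun c => p c = some ⟨j, a⟩), ∑ y ∈ subtree p c, x (p y)
          = if a = m j then
              (∑ c ∈ univ.filter (fun c => p c = some ⟨j, a⟩), γ c) * x (p j)
            else 0 := by
      intro a
      have : ∑ c ∈ univ.filter (fun c => p c = some ⟨j, a⟩), ∑ y ∈ subtree p c, x (p y)
          = (∑ c ∈ univ.filter (fun c => p c = some ⟨j, a⟩), γ c) * x (some ⟨j, a⟩) := by
        rw [Finset.sum_mul]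
        refine Finset.sum_congr rfl fun c hc => ?_
        simp only [mem_filter, mem_univ, true_and] at hc
        rw [ih c ⟨a, hc⟩, hc]
      rw [this, hxi j a]
      by_cases h : a = m j <;> simp [h]
    rw [Finset.sum_congr rfl fun a _ => step1 a, Finset.sum_ite_eq' univ (m j)]
    simp only [mem_univ, if_true]
    rw [hγ j, hm j]
    ring


end DGEaux

open DGEaux in
theorem dge_root_weight_eq_max_l1
    {J : Type} [Fintype J] [DecidableEq J]
    {A : J → Type} [∀ j, Fintype (A j)] [∀ j, DecidableEq (A j)] [∀ j, Nonempty (A j)]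
    (p : J → Option ((j : J) × A j))
    (hwf : WellFounded (fun j' j : J => ∃ a : A j, p j' = some ⟨j, a⟩))
    (γ : J → ℝ) (γ0 : ℝ)
    (hγ : ∀ j : J, γ j = 1 + (Finset.univ : Finset (A j)).sup' Finset.univ_nonempty
        (fun a => ∑ j' ∈ Finset.univ.filter (fun j' => p j' = some ⟨j, a⟩), γ j'))
    (hγ0 : γ0 = 1 + ∑ j ∈ Finset.univ.filter (fun j : J => p j = none), γ j)
    (Q : Set (Option ((j : J) × A j) → ℝ))
    (hQ : Q = {x | (∀ σ, 0 ≤ x σ) ∧ x none = 1 ∧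
        ∀ j : J, ∑ a : A j, x (some ⟨j, a⟩) = x (p j)}) :
    IsGreatest ((fun x : Option ((j : J) × A j) → ℝ => ∑ σ, x σ) '' Q) γ0 := by
  classical
  subst hQ hγ0
  have hwf' : WellFounded (chld p) := hwf
  have hsum : ∀ x : Option ((j : J) × A j) → ℝ,
      (∀ j : J, ∑ a : A j, x (some ⟨j, a⟩) = x (p j)) →
      ∑ σ, x σ = x none + ∑ j : J, x (p j) := by
    intro x hx
    rw [Fintype.sum_option]
    congr 1
    have husig : (Finset.univ : Finset ((j : J) × A j))
        = Finset.univ.sigma fun _ => Finset.univ := (Finset.univ_sigma_univ).symm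
    rw [husig, Finset.sum_sigma]
    exact Finset.sum_congr rfl fun j _ => hx j
  constructor
  · -- membership: construct the maximizer
    have hex : ∀ j : J, ∃ a : A j, (Finset.univ : Finset (A j)).sup' Finset.univ_nonempty
        (fun a => ∑ j' ∈ Finset.univ.filter (fun j' => p j' = some ⟨j, a⟩), γ j')
        = ∑ j' ∈ Finset.univ.filter (fun j' => p j' = some ⟨j, a⟩), γ j' := by
      intro j
      obtain ⟨a, -, h⟩ := Finset.exists_mem_eq_sup' (Finset.univ_nonempty)
        (fun a : A j => ∑ j' ∈ Finset.univ.filter (fun j' => p j' = some ⟨j, a⟩), γ j')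
      exact ⟨a, h⟩
    choose m hm using hex
    set good : J → Prop := fun j => ∃ q, p q = none ∧
      Relation.ReflTransGen (fun c q : J => p c = some ⟨q, m q⟩) j q with hgood
    set b : J → ℝ := fun j => if good j then 1 else 0 with hb
    set x : Option ((j : J) × A j) → ℝ := fun σ =>
      match σ with
      | none => 1
      | some ⟨j, a⟩ => if a = m j then b j else 0 with hx
    have hbx : ∀ j : J, b j = x (p j) := by
      intro j
      rcases h : p j with - | ⟨q, a⟩
      · have : good j := ⟨j, h, Relation.ReflTransGen.refl⟩
        simp [hb, hx, this]
      · by_cases ha : a = m q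
        · subst ha
          have hiff : good j ↔ good q := by
            constructor
            · rintro ⟨r, hr, hchain⟩
              rcases hchain.cases_head with rfl | ⟨s, hs, hrest⟩
              · rw [h] at hr; exact absurd hr (by simp)
              · rw [h] at hs
                obtain ⟨h1, h2⟩ := Sigma.mk.inj_iff.mp (Option.some.inj hs)
                subst h1
                exact ⟨r, hr, hrest⟩
            · rintro ⟨r, hr, hchain⟩
              exact ⟨r, hr, Relation.ReflTransGen.head h hchain⟩
          simp only [hb, hx, h]
          simp [hiff]
        · have hng : ¬ good j := by
            rintro ⟨r, hr, hchain⟩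
            rcases hchain.cases_head with rfl | ⟨s, hs, -⟩
            · rw [h] at hr; exact absurd hr (by simp)
            · rw [h] at hs
              obtain ⟨h1, h2⟩ := Sigma.mk.inj_iff.mp (Option.some.inj hs)
              subst h1
              exact ha (eq_of_heq h2)
          simp [hb, hx, h, hng, ha]
    have hxi : ∀ (j : J) (a : A j), x (some ⟨j, a⟩) = if a = m j then x (p j) else 0 := by
      intro j a
      rw [← hbx j]
    have hxs : ∀ j : J, ∑ a : A j, x (some ⟨j, a⟩) = x (p j) := by
      intro j
      rw [Finset.sum_congr rfl fun a _ => hxi j a, Finset.sum_ite_eq' Finset.univ (m j)]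
      simp
    have hx0 : ∀ σ, 0 ≤ x σ := by
      rintro (- | ⟨j, a⟩)
      · norm_num [hx]
      · show 0 ≤ if a = m j then b j else 0
        have hb0 : 0 ≤ b j := by simp only [hb]; split <;> norm_num
        split
        · exact hb0
        · exact le_refl 0
    refine ⟨x, ⟨hx0, rfl, hxs⟩, ?_⟩
    show (∑ σ, x σ) = _
    rw [hsum x hxs]
    show 1 + _ = _
    congr 1
    rw [sum_roots hwf' (fun j => x (p j))]
    refine Finset.sum_congr rfl fun q hq => ?_
    simp only [Finset.mem_filter, Finset.mem_univ, true_and] at hq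
    rw [subtree_eq hwf' γ m hγ hm x hxi q, hq]
    show γ q * (1:ℝ) = γ q
    ring
  · -- upper bound
    rintro v ⟨x, hx, rfl⟩
    obtain ⟨hx0, hx1, hxs⟩ := hx
    simp only
    rw [hsum x hxs, hx1]
    have h2 : ∑ j : J, x (p j)
        ≤ ∑ j ∈ Finset.univ.filter (fun j : J => p j = none), γ j := by
      rw [sum_roots hwf' (fun j => x (p j))]
      refine Finset.sum_le_sum fun q hq => ?_
      simp only [Finset.mem_filter, Finset.mem_univ, true_and] at hq
      calc ∑ j' ∈ subtree p q, x (p j') ≤ γ q * x (p q) :=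
            subtree_bound hwf' γ hγ x hx0 hxs q
        _ = γ q := by rw [hq]; show γ q * x none = γ q; rw [hx1]; ring
    linarith
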